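/- Let q_S, q_T : (ℤ/2ℤ)^5 → ℚ/2ℤ be defined by q_S(x) = (x̂_1² - x̂_2² - x̂_3² - x̂_4² - x̂_5²)/2 mod 2ℤ and q_T(x) = -(x̂_1² + ⋯ + x̂_5²)/2 mod 2ℤ, where x̂_i ∈ {0,1} lifts x_i (these are the discriminant forms of S = A_1(-1)⊕A_1^4 and T = U⊕U⊕E_8⊕A_1^5). Then there exists an additive group automorphism φ of (ℤ/2ℤ)^5 such that q_S(x) = -q_T(φ(x)) for all x; for instance φ sending e_1 ↦ e_1 and, for j = 1,…,4, sending e_2+e_3+e_4+e_5-e_{j+1} (the sum of the last four standard generators omitting e_{j+1}) to e_{j+1}. -/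
import Mathlib

/-- The discriminant quadratic form of `S = A₁(-1) ⊕ A₁⁴` on `(ℤ/2ℤ)⁵`, with values in
`ℚ/2ℤ`: `q_S(x) = (x̂₁² - x̂₂² - x̂₃² - x̂₄² - x̂₅²)/2 mod 2ℤ`, where `x̂ᵢ ∈ {0,1}` lifts `xᵢ`. -/
def qS (x : Fin 5 → ZMod 2) : AddCircle (2 : ℚ) :=
  ((((x 0).val ^ 2 : ℚ) - ((x 1).val ^ 2 : ℚ) - ((x 2).val ^ 2 : ℚ)
      - ((x 3).val ^ 2 : ℚ) - ((x 4).val ^ 2 : ℚ)) / 2 : ℚ)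

/-- The discriminant quadratic form of `T = U ⊕ U ⊕ E₈ ⊕ A₁⁵` on `(ℤ/2ℤ)⁵`, with values
in `ℚ/2ℤ`: `q_T(x) = -(x̂₁² + ⋯ + x̂₅²)/2 mod 2ℤ`. -/
def qT (x : Fin 5 → ZMod 2) : AddCircle (2 : ℚ) :=
  ((-(((x 0).val ^ 2 : ℚ) + ((x 1).val ^ 2 : ℚ) + ((x 2).val ^ 2 : ℚ)
      + ((x 3).val ^ 2 : ℚ) + ((x 4).val ^ 2 : ℚ)) / 2 : ℚ))

def phiFun (x : Fin 5 → ZMod 2) : Fin 5 → ZMod 2 :=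
  fun i => if i = 0 then x 0 else x 1 + x 2 + x 3 + x 4 + x i

lemma phiFun_invol (x : Fin 5 → ZMod 2) : phiFun (phiFun x) = x := by
  funext i
  by_cases h : i = 0
  · subst h; rfl
  · simp only [phiFun, if_neg h, if_neg (by decide : ¬ (1:Fin 5) = 0),
      if_neg (by decide : ¬ (2:Fin 5) = 0), if_neg (by decide : ¬ (3:Fin 5) = 0),
      if_neg (by decide : ¬ (4:Fin 5) = 0)]
    ring_nf
    simp [show (6 : ZMod 2) = 0 from by decide]

def phi : (Fin 5 → ZMod 2) ≃+ (Fin 5 → ZMod 2) where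
  toFun := phiFun
  invFun := phiFun
  left_inv := phiFun_invol
  right_inv := phiFun_invol
  map_add' x y := by
    funext i
    simp only [phiFun, Pi.add_apply]
    split_ifs <;> ring

lemma key (a b : ℚ) (n : ℤ) (h : a = b + 2 * n) : (a : AddCircle (2:ℚ)) = b := by
  subst h
  have : ((2 * n : ℚ) : AddCircle (2:ℚ)) = 0 := by
    rw [AddCircle.coe_eq_zero_iff]
    exact ⟨n, by rw [zsmul_eq_mul]; push_cast; ring⟩
  rw [QuotientAddGroup.mk_add, this, add_zero]

/-- There is an additive automorphism `φ` of `(ℤ/2ℤ)⁵` with `q_S = -q_T ∘ φ`; one such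
sends `e₁ ↦ e₁` and, for `j = 1, …, 4`, sends `e₂+e₃+e₄+e₅-e_{j+1}` to `e_{j+1}`. -/
theorem qS_iso_neg_qT :
    ∃ φ : (Fin 5 → ZMod 2) ≃+ (Fin 5 → ZMod 2),
      (∀ x, qS x = -qT (φ x)) ∧
      φ (Pi.single 0 1) = Pi.single 0 1 ∧
      ∀ j : Fin 5, j ≠ 0 →
        φ ((fun i => if i = 0 then 0 else 1) - Pi.single j 1) = Pi.single j 1 := by
  refine ⟨phi, ?_, ?_, ?_⟩
  · intro x
    have hx : ∀ a : ZMod 2, a = 0 ∨ a = 1 := by decide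
    have y0 : phi x 0 = x 0 := rfl
    have y1 : phi x 1 = x 1 + x 2 + x 3 + x 4 + x 1 := rfl
    have y2 : phi x 2 = x 1 + x 2 + x 3 + x 4 + x 2 := rfl
    have y3 : phi x 3 = x 1 + x 2 + x 3 + x 4 + x 3 := rfl
    have y4 : phi x 4 = x 1 + x 2 + x 3 + x 4 + x 4 := rfl
    rcases hx (x 0) with h0 | h0 <;> rcases hx (x 1) with h1 | h1 <;>
      rcases hx (x 2) with h2 | h2 <;> rcases hx (x 3) with h3 | h3 <;>
      rcases hx (x 4) with h4 | h4 <;>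
    · simp only [qS, qT, y0, y1, y2, y3, y4, h0, h1, h2, h3, h4, add_zero, zero_add,
        show (1 : ZMod 2) + 1 = 0 from by decide,
        show ((0 : ZMod 2)).val = 0 from rfl, show ((1 : ZMod 2)).val = 1 from rfl,
        ← QuotientAddGroup.mk_neg]
      first
      | (refine key _ _ 0 ?_; norm_num; done)
      | (refine key _ _ (-1) ?_; norm_num; done)
      | (refine key _ _ (-2) ?_; norm_num; done)
      | (refine key _ _ 1 ?_; norm_num; done)
      | (refine key _ _ 2 ?_; norm_num; done)
  · funext i
    fin_cases i <;> simp [phi, phiFun, Pi.single] <;> decide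
  · intro j hj
    funext i
    fin_cases j <;>
      first
      | exact absurd rfl hj
      | (fin_cases i <;> simp [phi, phiFun, Pi.single, Pi.sub_apply, sub_eq_add_neg] <;> decide)
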